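/- Suppose moreover that Δ_H^x = Δ_H for all x ∈ G. Then the monoid P = G⁺ ⋉ H⁺ is a Garside monoid with Garside element (Δ_G, Δ_H); explicitly: P is finitely generated; P is atomic; P is left- and right-cancellative; any two elements of P have a greatest common lower bound and a least common upper bound with respect to ≤_L, and likewise with respect to ≤_R; the set of left divisors of (Δ_G, Δ_H) in P equals its set of right divisors in P, equals {(a,b) : a ∈ G⁺, b ∈ H⁺, a ≤_L Δ_G, b ≤_L Δ_H}, and generates P. Moreover, every element of G ⋉ H can be written as p·q⁻¹ with p, q ∈ P, so G ⋉ H is the group of fractions of P and is a Garside group with positive monoid P. -/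

import Mathlib

/-- `a` left-divides `b` in the monoid `M`. -/
def dvdL {M : Type*} [Monoid M] (a b : M) : Prop := ∃ c, a * c = b

/-- `a` right-divides `b` in the monoid `M`. -/
def dvdR {M : Type*} [Monoid M] (a b : M) : Prop := ∃ c, c * a = b

/-- `L(a)`, the set of left divisors of `a`. -/
def Lset {M : Type*} [Monoid M] (a : M) : Set M := {x | dvdL x a}

/-- `R(a)`, the set of right divisors of `a`. -/
def Rset {M : Type*} [Monoid M] (a : M) : Set M := {x | dvdR x a}

/-- `a` is an atom: `a ≠ 1` and `a = b * c` implies `b = 1` or `c = 1`. -/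
def IsAtomElt {M : Type*} [Monoid M] (a : M) : Prop :=
  a ≠ 1 ∧ ∀ b c : M, a = b * c → b = 1 ∨ c = 1

/-- `M` is atomic: every element is a finite product of atoms, and the lengths of
expressions of a given element as products of atoms are bounded above. -/
def Atomic (M : Type*) [Monoid M] : Prop :=
  (∀ a : M, ∃ l : List M, (∀ x ∈ l, IsAtomElt x) ∧ l.prod = a) ∧
  (∀ a : M, ∃ N : ℕ, ∀ l : List M, (∀ x ∈ l, IsAtomElt x) → l.prod = a → l.length ≤ N)

/-- `Δ` is a Garside element: `L(Δ) = R(Δ)` and `L(Δ)` generates `M`. -/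
def IsGarsideElt {M : Type*} [Monoid M] (Δ : M) : Prop :=
  Lset Δ = Rset Δ ∧ Submonoid.closure (Lset Δ) = ⊤

/-- `d` is a greatest common lower bound of `a` and `b` with respect to `≤_L`. -/
def IsGlbL {M : Type*} [Monoid M] (a b d : M) : Prop :=
  dvdL d a ∧ dvdL d b ∧ ∀ c : M, dvdL c a → dvdL c b → dvdL c d

/-- `d` is a least common upper bound of `a` and `b` with respect to `≤_L`. -/
def IsLubL {M : Type*} [Monoid M] (a b d : M) : Prop :=
  dvdL a d ∧ dvdL b d ∧ ∀ c : M, dvdL a c → dvdL b c → dvdL d c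

/-- `d` is a greatest common lower bound of `a` and `b` with respect to `≤_R`. -/
def IsGlbR {M : Type*} [Monoid M] (a b d : M) : Prop :=
  dvdR d a ∧ dvdR d b ∧ ∀ c : M, dvdR c a → dvdR c b → dvdR c d

/-- `d` is a least common upper bound of `a` and `b` with respect to `≤_R`. -/
def IsLubR {M : Type*} [Monoid M] (a b d : M) : Prop :=
  dvdR a d ∧ dvdR b d ∧ ∀ c : M, dvdR a c → dvdR b c → dvdR d c

/-- `M` is a Garside monoid: finitely generated, left and right cancellative, atomic,
`≤_L`- and `≤_R`-lattice conditions, and it possesses a Garside element. -/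
def IsGarsideMonoid (M : Type*) [Monoid M] : Prop :=
  (∃ S : Set M, S.Finite ∧ Submonoid.closure S = ⊤) ∧
  (∀ a b c : M, a * b = a * c → b = c) ∧
  (∀ a b c : M, b * a = c * a → b = c) ∧
  Atomic M ∧
  (∀ a b : M, ∃ d, IsGlbL a b d) ∧
  (∀ a b : M, ∃ d, IsLubL a b d) ∧
  (∀ a b : M, ∃ d, IsGlbR a b d) ∧
  (∀ a b : M, ∃ d, IsLubR a b d) ∧
  (∃ Δ : M, IsGarsideElt Δ)

/-- Group-level left divisibility: `a ≤_L b` iff `a⁻¹ * b` is positive. -/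
def gdvdL {G : Type*} [Group G] (P : Submonoid G) (a b : G) : Prop := a⁻¹ * b ∈ P

/-- Group-level right divisibility: `a ≤_R b` iff `b * a⁻¹` is positive. -/
def gdvdR {G : Type*} [Group G] (P : Submonoid G) (a b : G) : Prop := b * a⁻¹ ∈ P

/-- `G` is a Garside group with positive monoid `P` and chosen Garside element `Δ`:
`P` is a Garside monoid, every element of `G` is a fraction `a * b⁻¹` of positive
elements, and `Δ` is a Garside element of `P`. -/
def IsGarsideGroup {G : Type*} [Group G] (P : Submonoid G) (Δ : G) : Prop :=
  IsGarsideMonoid P ∧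
  (∀ g : G, ∃ a b : P, g = (a : G) * (b : G)⁻¹) ∧
  ∃ hΔ : Δ ∈ P, IsGarsideElt (⟨Δ, hΔ⟩ : P)

/-- A right action of the group `G` on the group `H` by group automorphisms,
written `h ↦ ρ.act x h` (the paper's `h^x`). -/
structure RightAction (G H : Type*) [Group G] [Group H] where
  act : G → H → H
  act_mul : ∀ (x : G) (h₁ h₂ : H), act x (h₁ * h₂) = act x h₁ * act x h₂
  act_one : ∀ h : H, act 1 h = h
  act_comp : ∀ (x y : G) (h : H), act (x * y) h = act y (act x h)

namespace RightAction

variable {G H : Type*} [Group G] [Group H]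

lemma act_one' (ρ : RightAction G H) (x : G) : ρ.act x 1 = 1 := by
  have h := ρ.act_mul x 1 1
  rw [one_mul] at h
  exact left_eq_mul.mp h

end RightAction

/-- The semidirect product `G ⋉ H` with multiplication
`(x₁,h₁)·(x₂,h₂) = (x₁·x₂, h₁^{x₂}·h₂)`. -/
structure SDP {G H : Type*} [Group G] [Group H] (ρ : RightAction G H) where
  g : G
  h : H

namespace SDP

variable {G H : Type*} [Group G] [Group H] {ρ : RightAction G H}

protected def gmul (p q : SDP ρ) : SDP ρ := ⟨p.g * q.g, ρ.act q.g p.h * q.h⟩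

protected def gone : SDP ρ := ⟨1, 1⟩

protected def ginv (p : SDP ρ) : SDP ρ := ⟨p.g⁻¹, ρ.act p.g⁻¹ p.h⁻¹⟩

protected lemma gmul_assoc (p q r : SDP ρ) :
    SDP.gmul (SDP.gmul p q) r = SDP.gmul p (SDP.gmul q r) := by
  simp only [SDP.gmul, mk.injEq]
  exact ⟨mul_assoc _ _ _, by rw [ρ.act_mul, ρ.act_comp, mul_assoc]⟩

protected lemma gone_mul (p : SDP ρ) : SDP.gmul SDP.gone p = p := by
  simp only [SDP.gmul, SDP.gone]
  simp [RightAction.act_one']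

protected lemma gmul_one (p : SDP ρ) : SDP.gmul p SDP.gone = p := by
  simp only [SDP.gmul, SDP.gone]
  simp [ρ.act_one]

protected lemma ginv_mul_cancel (p : SDP ρ) : SDP.gmul (SDP.ginv p) p = SDP.gone := by
  simp only [SDP.gmul, SDP.ginv, SDP.gone, mk.injEq]
  rw [← ρ.act_comp]
  simp [ρ.act_one]

/-- The group structure on the semidirect product `G ⋉ H`. -/
instance : Group (SDP ρ) where
  mul := SDP.gmul
  one := SDP.gone
  inv := SDP.ginv
  mul_assoc := SDP.gmul_assoc
  one_mul := SDP.gone_mul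
  mul_one := SDP.gmul_one
  inv_mul_cancel := SDP.ginv_mul_cancel

@[simp] lemma mul_g (p q : SDP ρ) : (p * q).g = p.g * q.g := rfl
@[simp] lemma mul_h (p q : SDP ρ) : (p * q).h = ρ.act q.g p.h * q.h := rfl
@[simp] lemma one_g : (1 : SDP ρ).g = 1 := rfl
@[simp] lemma one_h : (1 : SDP ρ).h = 1 := rfl

end SDP

/-- Membership in the submonoid `G⁺ ⋉ H⁺` of `G ⋉ H`. -/
def SDPpos {G H : Type*} [Group G] [Group H] {ρ : RightAction G H}
    (PG : Submonoid G) (PH : Submonoid H) (p : SDP ρ) : Prop :=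
  p.g ∈ PG ∧ p.h ∈ PH

/-- `p ≤_L q` in `G ⋉ H`: `p · u = q` for some `u ∈ G⁺ ⋉ H⁺`. -/
def SDPdvdL {G H : Type*} [Group G] [Group H] {ρ : RightAction G H}
    (PG : Submonoid G) (PH : Submonoid H) (p q : SDP ρ) : Prop :=
  ∃ u : SDP ρ, SDPpos PG PH u ∧ p * u = q

/-- `p ≤_R q` in `G ⋉ H`: `u · p = q` for some `u ∈ G⁺ ⋉ H⁺`. -/
def SDPdvdR {G H : Type*} [Group G] [Group H] {ρ : RightAction G H}
    (PG : Submonoid G) (PH : Submonoid H) (p q : SDP ρ) : Prop :=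
  ∃ u : SDP ρ, SDPpos PG PH u ∧ u * p = q

section GenericAux

variable {K : Type*} [Group K] (Q : Submonoid K)

lemma subDvdL_iff (x y : Q) : dvdL x y ↔ gdvdL Q (x : K) (y : K) := by
  constructor
  · rintro ⟨c, rfl⟩
    simp only [gdvdL, Submonoid.coe_mul, inv_mul_cancel_left]
    exact c.2
  · intro h
    exact ⟨⟨_, h⟩, Subtype.ext (by simp)⟩

lemma subDvdR_iff (x y : Q) : dvdR x y ↔ gdvdR Q (x : K) (y : K) := by
  constructor
  · rintro ⟨c, rfl⟩
    simp only [gdvdR, Submonoid.coe_mul, mul_inv_cancel_right]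
    exact c.2
  · intro h
    exact ⟨⟨_, h⟩, Subtype.ext (by simp)⟩

lemma atomic_no_unit {M : Type*} [Monoid M] (hM : Atomic M) {u v : M} (huv : u * v = 1) :
    u = 1 ∧ v = 1 := by
  suffices hu : u = 1 by
    subst hu; rw [one_mul] at huv; exact ⟨rfl, huv⟩
  by_contra hu
  obtain ⟨N, hN⟩ := hM.2 1
  obtain ⟨lu, hlu, hpu⟩ := hM.1 u
  obtain ⟨lv, hlv, hpv⟩ := hM.1 v
  have hlen : 1 ≤ lu.length := by
    rcases lu with _ | ⟨a, t⟩
    · exact absurd hpu.symm (by simpa using hu)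
    · simp
  set L : List M := (List.replicate (N + 1) (lu ++ lv)).flatten with hL
  have hmem : ∀ x ∈ L, IsAtomElt x := by
    intro x hx
    rw [hL, List.mem_flatten] at hx
    obtain ⟨l, hl, hxl⟩ := hx
    rw [List.mem_replicate] at hl
    rw [hl.2, List.mem_append] at hxl
    rcases hxl with h | h
    · exact hlu x h
    · exact hlv x h
  have hprod : L.prod = 1 := by
    rw [hL, List.prod_flatten, List.map_replicate, List.prod_replicate, List.prod_append,
      hpu, hpv, huv, one_pow]
  have := hN L hmem hprod
  have hlen2 : N + 1 ≤ L.length := by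
    rw [hL, List.length_flatten, List.map_replicate]
    have h1 : 1 ≤ (lu ++ lv).length := by
      rw [List.length_append]; omega
    have : (N + 1) * 1 ≤ (N + 1) * (lu ++ lv).length := Nat.mul_le_mul_left _ h1
    rw [List.sum_replicate, smul_eq_mul]
    omega
  omega

end GenericAux
section SdpAux

variable {G H : Type*} [Group G] [Group H] {ρ : RightAction G H}

@[simp] lemma SDP.inv_g (p : SDP ρ) : (p⁻¹).g = p.g⁻¹ := rfl
@[simp] lemma SDP.inv_h (p : SDP ρ) : (p⁻¹).h = ρ.act p.g⁻¹ p.h⁻¹ := rfl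

lemma act_act (ρ : RightAction G H) (x y : G) (h : H) :
    ρ.act y (ρ.act x h) = ρ.act (x * y) h := (ρ.act_comp x y h).symm

lemma act_inv_act (ρ : RightAction G H) (x : G) (h : H) :
    ρ.act x⁻¹ (ρ.act x h) = h := by
  rw [act_act, mul_inv_cancel, ρ.act_one]

lemma act_act_inv (ρ : RightAction G H) (x : G) (h : H) :
    ρ.act x (ρ.act x⁻¹ h) = h := by
  rw [act_act, inv_mul_cancel, ρ.act_one]

lemma act_injective (ρ : RightAction G H) (x : G) {h h' : H}
    (e : ρ.act x h = ρ.act x h') : h = h' := by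
  rw [← act_inv_act ρ x h, e, act_inv_act]

lemma act_inv (ρ : RightAction G H) (x : G) (h : H) :
    ρ.act x h⁻¹ = (ρ.act x h)⁻¹ := by
  symm
  apply inv_eq_of_mul_eq_one_right
  rw [← ρ.act_mul, mul_inv_cancel, ρ.act_one']

lemma act_eq_one_iff (ρ : RightAction G H) (x : G) (h : H) :
    ρ.act x h = 1 ↔ h = 1 := by
  constructor
  · intro e; exact act_injective ρ x (by rw [e, ρ.act_one'])
  · rintro rfl; exact ρ.act_one' x

variable (PH : Submonoid H)

lemma act_mem (hact : ∀ x : G, ρ.act x '' (PH : Set H) = (PH : Set H))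
    (x : G) {b : H} (hb : b ∈ PH) : ρ.act x b ∈ PH := by
  have : ρ.act x b ∈ ρ.act x '' (PH : Set H) := ⟨b, hb, rfl⟩
  rwa [hact x] at this

lemma act_mem_iff (hact : ∀ x : G, ρ.act x '' (PH : Set H) = (PH : Set H))
    (x : G) (b : H) : ρ.act x b ∈ PH ↔ b ∈ PH := by
  constructor
  · intro hb
    have := act_mem PH hact x⁻¹ hb
    rwa [act_inv_act] at this
  · exact act_mem PH hact x

end SdpAux
section SdpMain

variable {G H : Type*} [Group G] [Group H] {ρ : RightAction G H}
  {PG : Submonoid G} {PH : Submonoid H} {P : Submonoid (SDP ρ)}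

@[simp] lemma SDP.mk_mul_mk (a c : G) (b d : H) :
    (SDP.mk a b : SDP ρ) * SDP.mk c d = SDP.mk (a * c) (ρ.act c b * d) := rfl

lemma SDP.one_def : (1 : SDP ρ) = SDP.mk 1 1 := rfl

lemma SDP.eta (p : SDP ρ) : SDP.mk p.g p.h = p := rfl

lemma memG (hP : ∀ p : SDP ρ, p ∈ P ↔ p.g ∈ PG ∧ p.h ∈ PH) (p : P) :
    (p : SDP ρ).g ∈ PG := ((hP _).mp p.2).1

lemma memH (hP : ∀ p : SDP ρ, p ∈ P ↔ p.g ∈ PG ∧ p.h ∈ PH) (p : P) :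
    (p : SDP ρ).h ∈ PH := ((hP _).mp p.2).2

lemma memH' (hact : ∀ x : G, ρ.act x '' (PH : Set H) = (PH : Set H))
    (hP : ∀ p : SDP ρ, p ∈ P ↔ p.g ∈ PG ∧ p.h ∈ PH) (p : P) :
    ρ.act (p : SDP ρ).g⁻¹ (p : SDP ρ).h ∈ PH :=
  act_mem PH hact _ (memH hP p)

lemma dvdL_char (hact : ∀ x : G, ρ.act x '' (PH : Set H) = (PH : Set H))
    (hP : ∀ p : SDP ρ, p ∈ P ↔ p.g ∈ PG ∧ p.h ∈ PH) (p q : P) :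
    dvdL p q ↔ gdvdL PG (p : SDP ρ).g (q : SDP ρ).g ∧
      gdvdL PH (ρ.act (p : SDP ρ).g⁻¹ (p : SDP ρ).h)
        (ρ.act (q : SDP ρ).g⁻¹ (q : SDP ρ).h) := by
  rw [subDvdL_iff, gdvdL, hP]
  simp only [SDP.mul_g, SDP.mul_h, SDP.inv_g, SDP.inv_h]
  apply and_congr Iff.rfl
  rw [← act_mem_iff PH hact ((q : SDP ρ).g)⁻¹]
  rw [ρ.act_mul, act_inv_act, act_inv]
  exact Iff.rfl

lemma dvdR_char (hact : ∀ x : G, ρ.act x '' (PH : Set H) = (PH : Set H))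
    (hP : ∀ p : SDP ρ, p ∈ P ↔ p.g ∈ PG ∧ p.h ∈ PH) (p q : P) :
    dvdR p q ↔ gdvdR PG (p : SDP ρ).g (q : SDP ρ).g ∧
      gdvdR PH (p : SDP ρ).h (q : SDP ρ).h := by
  rw [subDvdR_iff, gdvdR, hP]
  simp only [SDP.mul_g, SDP.mul_h, SDP.inv_g, SDP.inv_h]
  apply and_congr Iff.rfl
  rw [← ρ.act_mul, act_mem_iff PH hact]
  exact Iff.rfl

/-- The embedding `PG →* P`, `a ↦ (a, 1)`. -/
def iotaG (hP : ∀ p : SDP ρ, p ∈ P ↔ p.g ∈ PG ∧ p.h ∈ PH) : PG →* P where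
  toFun a := ⟨SDP.mk (a : G) 1, (hP _).mpr ⟨a.2, PH.one_mem⟩⟩
  map_one' := rfl
  map_mul' a b := Subtype.ext (by
    show SDP.mk ((a : G) * b) 1 = SDP.mk (a : G) 1 * SDP.mk (b : G) 1
    rw [SDP.mk_mul_mk, ρ.act_one', one_mul])

/-- The embedding `PH →* P`, `b ↦ (1, b)`. -/
def iotaH (hP : ∀ p : SDP ρ, p ∈ P ↔ p.g ∈ PG ∧ p.h ∈ PH) : PH →* P where
  toFun b := ⟨SDP.mk 1 (b : H), (hP _).mpr ⟨PG.one_mem, b.2⟩⟩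
  map_one' := rfl
  map_mul' a b := Subtype.ext (by
    show SDP.mk 1 ((a : H) * b) = SDP.mk 1 (a : H) * SDP.mk 1 (b : H)
    rw [SDP.mk_mul_mk, ρ.act_one, one_mul])

lemma decompP (hP : ∀ p : SDP ρ, p ∈ P ↔ p.g ∈ PG ∧ p.h ∈ PH) (p : P) :
    p = iotaG hP ⟨_, memG hP p⟩ * iotaH hP ⟨_, memH hP p⟩ := by
  apply Subtype.ext
  show (p : SDP ρ) = SDP.mk (p : SDP ρ).g 1 * SDP.mk 1 (p : SDP ρ).h
  rw [SDP.mk_mul_mk, ρ.act_one, one_mul, mul_one, SDP.eta]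

lemma pos_unit {K : Type*} [Group K] {Q : Submonoid K} (hQ : Atomic Q)
    {y z : K} (hy : y ∈ Q) (hz : z ∈ Q) (e : y * z = 1) : y = 1 ∧ z = 1 := by
  have h2 : (⟨y, hy⟩ : Q) * ⟨z, hz⟩ = 1 := Subtype.ext (by simpa using e)
  have h3 := atomic_no_unit hQ h2
  exact ⟨by simpa using congrArg Subtype.val h3.1,
    by simpa using congrArg Subtype.val h3.2⟩

end SdpMain
section SdpAtoms

variable {G H : Type*} [Group G] [Group H] {ρ : RightAction G H}
  {PG : Submonoid G} {PH : Submonoid H} {P : Submonoid (SDP ρ)}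

lemma eqOneP (p : P) (h1 : (p : SDP ρ).g = 1) (h2 : (p : SDP ρ).h = 1) : p = 1 := by
  apply Subtype.ext
  rw [← SDP.eta ((p : SDP ρ)), h1, h2]
  rfl

lemma oneP_g : ((1 : P) : SDP ρ).g = 1 := rfl
lemma oneP_h : ((1 : P) : SDP ρ).h = 1 := rfl

lemma actAtom (hact : ∀ x : G, ρ.act x '' (PH : Set H) = (PH : Set H))
    (x : G) (b : PH) (hb : IsAtomElt b) :
    IsAtomElt (⟨ρ.act x (b : H), act_mem PH hact x b.2⟩ : PH) := by
  constructor
  · intro e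
    apply hb.1
    apply Subtype.ext
    have := congrArg Subtype.val e
    simp only at this
    exact (act_eq_one_iff ρ x _).mp this
  · intro c d e
    have e' : ρ.act x (b : H) = (c : H) * d := congrArg Subtype.val e
    have eb : (b : H) = ρ.act x⁻¹ (c : H) * ρ.act x⁻¹ (d : H) := by
      rw [← ρ.act_mul, ← e', act_inv_act]
    have : b = (⟨ρ.act x⁻¹ (c : H), act_mem PH hact _ c.2⟩ : PH) *
        ⟨ρ.act x⁻¹ (d : H), act_mem PH hact _ d.2⟩ := Subtype.ext eb
    rcases hb.2 _ _ this with h | h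
    · left
      apply Subtype.ext
      have := congrArg Subtype.val h
      simp only at this
      exact (act_eq_one_iff ρ x⁻¹ _).mp this
    · right
      apply Subtype.ext
      have := congrArg Subtype.val h
      simp only at this
      exact (act_eq_one_iff ρ x⁻¹ _).mp this

lemma atomG (hact : ∀ x : G, ρ.act x '' (PH : Set H) = (PH : Set H))
    (hP : ∀ p : SDP ρ, p ∈ P ↔ p.g ∈ PG ∧ p.h ∈ PH)
    (hHat : Atomic PH) (a : PG) (ha : IsAtomElt a) : IsAtomElt (iotaG hP a) := by
  constructor
  · intro e
    apply ha.1
    apply Subtype.ext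
    have := congrArg (fun z : P => ((z : SDP ρ)).g) e
    exact this
  · intro q r e
    have ev : SDP.mk (a : G) (1 : H) = (q : SDP ρ) * (r : SDP ρ) := congrArg Subtype.val e
    have eg : (a : G) = (q : SDP ρ).g * (r : SDP ρ).g := congrArg SDP.g ev
    have eh : (1 : H) = ρ.act (r : SDP ρ).g (q : SDP ρ).h * (r : SDP ρ).h :=
      congrArg SDP.h ev
    obtain ⟨h1, h2⟩ := pos_unit hHat (act_mem PH hact _ (memH hP q)) (memH hP r) eh.symm
    have hq : (q : SDP ρ).h = 1 := (act_eq_one_iff ρ _ _).mp h1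
    have : a = (⟨(q : SDP ρ).g, memG hP q⟩ : PG) * ⟨(r : SDP ρ).g, memG hP r⟩ :=
      Subtype.ext eg
    rcases ha.2 _ _ this with h | h
    · exact Or.inl (eqOneP q (congrArg Subtype.val h) hq)
    · exact Or.inr (eqOneP r (congrArg Subtype.val h) h2)

lemma atomH (hP : ∀ p : SDP ρ, p ∈ P ↔ p.g ∈ PG ∧ p.h ∈ PH)
    (hGat : Atomic PG) (b : PH) (hb : IsAtomElt b) : IsAtomElt (iotaH hP b) := by
  constructor
  · intro e
    apply hb.1
    apply Subtype.ext
    have := congrArg (fun z : P => ((z : SDP ρ)).h) e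
    exact this
  · intro q r e
    have ev : SDP.mk (1 : G) (b : H) = (q : SDP ρ) * (r : SDP ρ) := congrArg Subtype.val e
    have eg : (1 : G) = (q : SDP ρ).g * (r : SDP ρ).g := congrArg SDP.g ev
    have eh : (b : H) = ρ.act (r : SDP ρ).g (q : SDP ρ).h * (r : SDP ρ).h :=
      congrArg SDP.h ev
    obtain ⟨h1, h2⟩ := pos_unit hGat (memG hP q) (memG hP r) eg.symm
    rw [h2, ρ.act_one] at eh
    have : b = (⟨(q : SDP ρ).h, memH hP q⟩ : PH) * ⟨(r : SDP ρ).h, memH hP r⟩ :=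
      Subtype.ext eh
    rcases hb.2 _ _ this with h | h
    · exact Or.inl (eqOneP q h1 (congrArg Subtype.val h))
    · exact Or.inr (eqOneP r h2 (congrArg Subtype.val h))

lemma atomP_cases (hact : ∀ x : G, ρ.act x '' (PH : Set H) = (PH : Set H))
    (hP : ∀ p : SDP ρ, p ∈ P ↔ p.g ∈ PG ∧ p.h ∈ PH)
    (p : P) (hp : IsAtomElt p) :
    ((p : SDP ρ).h = 1 ∧ IsAtomElt (⟨(p : SDP ρ).g, memG hP p⟩ : PG)) ∨
    ((p : SDP ρ).g = 1 ∧ IsAtomElt (⟨(p : SDP ρ).h, memH hP p⟩ : PH)) := by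
  rcases hp.2 _ _ (decompP hP p) with h | h
  · -- iotaG part is 1, so p.g = 1
    right
    have hg : (p : SDP ρ).g = 1 := by
      have := congrArg (fun z : P => ((z : SDP ρ)).g) h
      exact this
    refine ⟨hg, ?_, ?_⟩
    · intro e
      exact hp.1 (eqOneP p hg (congrArg Subtype.val e))
    · intro c d e
      have hpe : p = iotaH hP ⟨(p : SDP ρ).h, memH hP p⟩ := by
        apply Subtype.ext
        show (p : SDP ρ) = SDP.mk 1 (p : SDP ρ).h
        rw [← SDP.eta ((p : SDP ρ)), hg]
      rw [e, map_mul] at hpe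
      rcases hp.2 _ _ hpe with h' | h'
      · left
        apply Subtype.ext
        have := congrArg (fun z : P => ((z : SDP ρ)).h) h'
        exact this
      · right
        apply Subtype.ext
        have := congrArg (fun z : P => ((z : SDP ρ)).h) h'
        exact this
  · -- iotaH part is 1, so p.h = 1
    left
    have hh : (p : SDP ρ).h = 1 := by
      have := congrArg (fun z : P => ((z : SDP ρ)).h) h
      exact this
    refine ⟨hh, ?_, ?_⟩
    · intro e
      exact hp.1 (eqOneP p (congrArg Subtype.val e) hh)
    · intro c d e
      have hpe : p = iotaG hP ⟨(p : SDP ρ).g, memG hP p⟩ := by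
        apply Subtype.ext
        show (p : SDP ρ) = SDP.mk (p : SDP ρ).g 1
        rw [← SDP.eta ((p : SDP ρ)), hh]
      rw [e, map_mul] at hpe
      rcases hp.2 _ _ hpe with h' | h'
      · left
        apply Subtype.ext
        have := congrArg (fun z : P => ((z : SDP ρ)).g) h'
        exact this
      · right
        apply Subtype.ext
        have := congrArg (fun z : P => ((z : SDP ρ)).g) h'
        exact this

end SdpAtoms
section SdpAtomic

variable {G H : Type*} [Group G] [Group H] {ρ : RightAction G H}
  {PG : Submonoid G} {PH : Submonoid H} {P : Submonoid (SDP ρ)}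

lemma atomList (hact : ∀ x : G, ρ.act x '' (PH : Set H) = (PH : Set H))
    (hP : ∀ p : SDP ρ, p ∈ P ↔ p.g ∈ PG ∧ p.h ∈ PH) :
    ∀ l : List P, (∀ x ∈ l, IsAtomElt x) →
    ∃ (lG : List PG) (lH : List PH),
      (∀ x ∈ lG, IsAtomElt x) ∧ (∀ x ∈ lH, IsAtomElt x) ∧
      lG.length + lH.length = l.length ∧
      ((lG.prod : G) = ((l.prod : P) : SDP ρ).g) ∧
      ((lH.prod : H) = ((l.prod : P) : SDP ρ).h) := by
  intro l
  induction l with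
  | nil =>
    intro _
    exact ⟨[], [], by simp, by simp, by simp, rfl, rfl⟩
  | cons x t ih =>
    intro hl
    obtain ⟨lG, lH, h1, h2, h3, h4, h5⟩ := ih (fun y hy => hl y (List.mem_cons_of_mem x hy))
    have hx := hl x List.mem_cons_self
    have hprod : ((List.prod (x :: t) : P) : SDP ρ) = (x : SDP ρ) * ((t.prod : P) : SDP ρ) := by
      rw [List.prod_cons]; rfl
    rcases atomP_cases hact hP x hx with ⟨hxh, hxa⟩ | ⟨hxg, hxa⟩
    · refine ⟨⟨(x : SDP ρ).g, memG hP x⟩ :: lG, lH, ?_, h2, ?_, ?_, ?_⟩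
      · intro y hy
        rcases List.mem_cons.mp hy with rfl | hy
        · exact hxa
        · exact h1 y hy
      · simp only [List.length_cons] at *; omega
      · rw [List.prod_cons, Submonoid.coe_mul, h4, hprod, SDP.mul_g]
      · rw [h5, hprod, SDP.mul_h, hxh, RightAction.act_one', one_mul]
    · refine ⟨lG, ⟨ρ.act ((t.prod : P) : SDP ρ).g (x : SDP ρ).h,
        act_mem PH hact _ (memH hP x)⟩ :: lH, h1, ?_, ?_, ?_, ?_⟩
      · intro y hy
        rcases List.mem_cons.mp hy with rfl | hy
        · exact actAtom hact _ ⟨(x : SDP ρ).h, memH hP x⟩ hxa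
        · exact h2 y hy
      · simp only [List.length_cons] at *; omega
      · rw [h4, hprod, SDP.mul_g, hxg, one_mul]
      · rw [List.prod_cons, Submonoid.coe_mul, h5, hprod, SDP.mul_h]

lemma atomicP (hact : ∀ x : G, ρ.act x '' (PH : Set H) = (PH : Set H))
    (hP : ∀ p : SDP ρ, p ∈ P ↔ p.g ∈ PG ∧ p.h ∈ PH)
    (hGat : Atomic PG) (hHat : Atomic PH) : Atomic P := by
  constructor
  · intro p
    obtain ⟨lG, hlG, hpG⟩ := hGat.1 ⟨(p : SDP ρ).g, memG hP p⟩
    obtain ⟨lH, hlH, hpH⟩ := hHat.1 ⟨(p : SDP ρ).h, memH hP p⟩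
    refine ⟨lG.map (iotaG hP) ++ lH.map (iotaH hP), ?_, ?_⟩
    · intro y hy
      rcases List.mem_append.mp hy with hy | hy
      · obtain ⟨a, ha, rfl⟩ := List.mem_map.mp hy
        exact atomG hact hP hHat a (hlG a ha)
      · obtain ⟨b, hb, rfl⟩ := List.mem_map.mp hy
        exact atomH hP hGat b (hlH b hb)
    · rw [List.prod_append, ← map_list_prod, ← map_list_prod, hpG, hpH, ← decompP]
  · intro p
    obtain ⟨NG, hNG⟩ := hGat.2 ⟨(p : SDP ρ).g, memG hP p⟩
    obtain ⟨NH, hNH⟩ := hHat.2 ⟨(p : SDP ρ).h, memH hP p⟩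
    refine ⟨NG + NH, ?_⟩
    intro l hl hlp
    obtain ⟨lG, lH, h1, h2, h3, h4, h5⟩ := atomList hact hP l hl
    rw [hlp] at h4 h5
    have e4 : lG.prod = ⟨(p : SDP ρ).g, memG hP p⟩ := Subtype.ext h4
    have e5 : lH.prod = ⟨(p : SDP ρ).h, memH hP p⟩ := Subtype.ext h5
    have := hNG lG h1 e4
    have := hNH lH h2 e5
    omega

lemma genP (hP : ∀ p : SDP ρ, p ∈ P ↔ p.g ∈ PG ∧ p.h ∈ PH)
    {SG : Set PG} {SH : Set PH}
    (hSG : Submonoid.closure SG = ⊤) (hSH : Submonoid.closure SH = ⊤)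
    {S : Set P} (hsub : iotaG hP '' SG ∪ iotaH hP '' SH ⊆ S) :
    Submonoid.closure S = ⊤ := by
  rw [eq_top_iff]
  intro p _
  rw [decompP hP p]
  apply mul_mem
  · have h1 : (⟨(p : SDP ρ).g, memG hP p⟩ : PG) ∈ Submonoid.closure SG := by
      rw [hSG]; trivial
    have h2 : iotaG hP ⟨(p : SDP ρ).g, memG hP p⟩ ∈
        (Submonoid.closure SG).map (iotaG hP) := Submonoid.mem_map_of_mem _ h1
    rw [MonoidHom.map_mclosure] at h2
    exact Submonoid.closure_mono (subset_trans Set.subset_union_left hsub) h2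
  · have h1 : (⟨(p : SDP ρ).h, memH hP p⟩ : PH) ∈ Submonoid.closure SH := by
      rw [hSH]; trivial
    have h2 : iotaH hP ⟨(p : SDP ρ).h, memH hP p⟩ ∈
        (Submonoid.closure SH).map (iotaH hP) := Submonoid.mem_map_of_mem _ h1
    rw [MonoidHom.map_mclosure] at h2
    exact Submonoid.closure_mono (subset_trans Set.subset_union_right hsub) h2

end SdpAtomic
section SdpLattice

variable {G H : Type*} [Group G] [Group H] {ρ : RightAction G H}
  {PG : Submonoid G} {PH : Submonoid H} {P : Submonoid (SDP ρ)}

lemma glbLP (hact : ∀ x : G, ρ.act x '' (PH : Set H) = (PH : Set H))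
    (hP : ∀ p : SDP ρ, p ∈ P ↔ p.g ∈ PG ∧ p.h ∈ PH)
    (hPGl : ∀ a b : PG, ∃ d, IsGlbL a b d) (hPHl : ∀ a b : PH, ∃ d, IsGlbL a b d)
    (p q : P) : ∃ d, IsGlbL p q d := by
  obtain ⟨dG, hdG1, hdG2, hdG3⟩ := hPGl ⟨_, memG hP p⟩ ⟨_, memG hP q⟩
  obtain ⟨dH, hdH1, hdH2, hdH3⟩ := hPHl ⟨_, memH' hact hP p⟩ ⟨_, memH' hact hP q⟩
  refine ⟨⟨SDP.mk (dG : G) (ρ.act (dG : G) (dH : H)),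
    (hP _).mpr ⟨dG.2, act_mem PH hact _ dH.2⟩⟩, ?_, ?_, ?_⟩
  · rw [dvdL_char hact hP]
    show gdvdL PG (dG : G) ((p : SDP ρ)).g ∧
      gdvdL PH (ρ.act ((dG : G))⁻¹ (ρ.act (dG : G) (dH : H)))
        (ρ.act ((p : SDP ρ)).g⁻¹ ((p : SDP ρ)).h)
    rw [act_inv_act]
    exact ⟨(subDvdL_iff PG _ _).mp hdG1, (subDvdL_iff PH _ _).mp hdH1⟩
  · rw [dvdL_char hact hP]
    show gdvdL PG (dG : G) ((q : SDP ρ)).g ∧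
      gdvdL PH (ρ.act ((dG : G))⁻¹ (ρ.act (dG : G) (dH : H)))
        (ρ.act ((q : SDP ρ)).g⁻¹ ((q : SDP ρ)).h)
    rw [act_inv_act]
    exact ⟨(subDvdL_iff PG _ _).mp hdG2, (subDvdL_iff PH _ _).mp hdH2⟩
  · intro c hc1 hc2
    rw [dvdL_char hact hP] at hc1 hc2 ⊢
    show gdvdL PG ((c : SDP ρ)).g (dG : G) ∧
      gdvdL PH (ρ.act ((c : SDP ρ)).g⁻¹ ((c : SDP ρ)).h)
        (ρ.act ((dG : G))⁻¹ (ρ.act (dG : G) (dH : H)))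
    rw [act_inv_act]
    constructor
    · exact (subDvdL_iff PG ⟨_, memG hP c⟩ dG).mp
        (hdG3 ⟨_, memG hP c⟩ ((subDvdL_iff PG _ _).mpr hc1.1)
          ((subDvdL_iff PG _ _).mpr hc2.1))
    · exact (subDvdL_iff PH ⟨_, memH' hact hP c⟩ dH).mp
        (hdH3 ⟨_, memH' hact hP c⟩ ((subDvdL_iff PH _ _).mpr hc1.2)
          ((subDvdL_iff PH _ _).mpr hc2.2))

lemma lubLP (hact : ∀ x : G, ρ.act x '' (PH : Set H) = (PH : Set H))
    (hP : ∀ p : SDP ρ, p ∈ P ↔ p.g ∈ PG ∧ p.h ∈ PH)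
    (hPGl : ∀ a b : PG, ∃ d, IsLubL a b d) (hPHl : ∀ a b : PH, ∃ d, IsLubL a b d)
    (p q : P) : ∃ d, IsLubL p q d := by
  obtain ⟨dG, hdG1, hdG2, hdG3⟩ := hPGl ⟨_, memG hP p⟩ ⟨_, memG hP q⟩
  obtain ⟨dH, hdH1, hdH2, hdH3⟩ := hPHl ⟨_, memH' hact hP p⟩ ⟨_, memH' hact hP q⟩
  refine ⟨⟨SDP.mk (dG : G) (ρ.act (dG : G) (dH : H)),
    (hP _).mpr ⟨dG.2, act_mem PH hact _ dH.2⟩⟩, ?_, ?_, ?_⟩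
  · rw [dvdL_char hact hP]
    show gdvdL PG ((p : SDP ρ)).g (dG : G) ∧
      gdvdL PH (ρ.act ((p : SDP ρ)).g⁻¹ ((p : SDP ρ)).h)
        (ρ.act ((dG : G))⁻¹ (ρ.act (dG : G) (dH : H)))
    rw [act_inv_act]
    exact ⟨(subDvdL_iff PG _ _).mp hdG1, (subDvdL_iff PH _ _).mp hdH1⟩
  · rw [dvdL_char hact hP]
    show gdvdL PG ((q : SDP ρ)).g (dG : G) ∧
      gdvdL PH (ρ.act ((q : SDP ρ)).g⁻¹ ((q : SDP ρ)).h)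
        (ρ.act ((dG : G))⁻¹ (ρ.act (dG : G) (dH : H)))
    rw [act_inv_act]
    exact ⟨(subDvdL_iff PG _ _).mp hdG2, (subDvdL_iff PH _ _).mp hdH2⟩
  · intro c hc1 hc2
    rw [dvdL_char hact hP] at hc1 hc2 ⊢
    show gdvdL PG (dG : G) ((c : SDP ρ)).g ∧
      gdvdL PH (ρ.act ((dG : G))⁻¹ (ρ.act (dG : G) (dH : H)))
        (ρ.act ((c : SDP ρ)).g⁻¹ ((c : SDP ρ)).h)
    rw [act_inv_act]
    constructor
    · exact (subDvdL_iff PG dG ⟨_, memG hP c⟩).mp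
        (hdG3 ⟨_, memG hP c⟩ ((subDvdL_iff PG _ _).mpr hc1.1)
          ((subDvdL_iff PG _ _).mpr hc2.1))
    · exact (subDvdL_iff PH dH ⟨_, memH' hact hP c⟩).mp
        (hdH3 ⟨_, memH' hact hP c⟩ ((subDvdL_iff PH _ _).mpr hc1.2)
          ((subDvdL_iff PH _ _).mpr hc2.2))

lemma glbRP (hact : ∀ x : G, ρ.act x '' (PH : Set H) = (PH : Set H))
    (hP : ∀ p : SDP ρ, p ∈ P ↔ p.g ∈ PG ∧ p.h ∈ PH)
    (hPGl : ∀ a b : PG, ∃ d, IsGlbR a b d) (hPHl : ∀ a b : PH, ∃ d, IsGlbR a b d)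
    (p q : P) : ∃ d, IsGlbR p q d := by
  obtain ⟨dG, hdG1, hdG2, hdG3⟩ := hPGl ⟨_, memG hP p⟩ ⟨_, memG hP q⟩
  obtain ⟨dH, hdH1, hdH2, hdH3⟩ := hPHl ⟨_, memH hP p⟩ ⟨_, memH hP q⟩
  refine ⟨⟨SDP.mk (dG : G) (dH : H), (hP _).mpr ⟨dG.2, dH.2⟩⟩, ?_, ?_, ?_⟩
  · rw [dvdR_char hact hP]
    exact ⟨(subDvdR_iff PG _ _).mp hdG1, (subDvdR_iff PH _ _).mp hdH1⟩
  · rw [dvdR_char hact hP]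
    exact ⟨(subDvdR_iff PG _ _).mp hdG2, (subDvdR_iff PH _ _).mp hdH2⟩
  · intro c hc1 hc2
    rw [dvdR_char hact hP] at hc1 hc2 ⊢
    constructor
    · exact (subDvdR_iff PG ⟨_, memG hP c⟩ dG).mp
        (hdG3 ⟨_, memG hP c⟩ ((subDvdR_iff PG _ _).mpr hc1.1)
          ((subDvdR_iff PG _ _).mpr hc2.1))
    · exact (subDvdR_iff PH ⟨_, memH hP c⟩ dH).mp
        (hdH3 ⟨_, memH hP c⟩ ((subDvdR_iff PH _ _).mpr hc1.2)
          ((subDvdR_iff PH _ _).mpr hc2.2))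

lemma lubRP (hact : ∀ x : G, ρ.act x '' (PH : Set H) = (PH : Set H))
    (hP : ∀ p : SDP ρ, p ∈ P ↔ p.g ∈ PG ∧ p.h ∈ PH)
    (hPGl : ∀ a b : PG, ∃ d, IsLubR a b d) (hPHl : ∀ a b : PH, ∃ d, IsLubR a b d)
    (p q : P) : ∃ d, IsLubR p q d := by
  obtain ⟨dG, hdG1, hdG2, hdG3⟩ := hPGl ⟨_, memG hP p⟩ ⟨_, memG hP q⟩
  obtain ⟨dH, hdH1, hdH2, hdH3⟩ := hPHl ⟨_, memH hP p⟩ ⟨_, memH hP q⟩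
  refine ⟨⟨SDP.mk (dG : G) (dH : H), (hP _).mpr ⟨dG.2, dH.2⟩⟩, ?_, ?_, ?_⟩
  · rw [dvdR_char hact hP]
    exact ⟨(subDvdR_iff PG _ _).mp hdG1, (subDvdR_iff PH _ _).mp hdH1⟩
  · rw [dvdR_char hact hP]
    exact ⟨(subDvdR_iff PG _ _).mp hdG2, (subDvdR_iff PH _ _).mp hdH2⟩
  · intro c hc1 hc2
    rw [dvdR_char hact hP] at hc1 hc2 ⊢
    constructor
    · exact (subDvdR_iff PG dG ⟨_, memG hP c⟩).mp
        (hdG3 ⟨_, memG hP c⟩ ((subDvdR_iff PG _ _).mpr hc1.1)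
          ((subDvdR_iff PG _ _).mpr hc2.1))
    · exact (subDvdR_iff PH dH ⟨_, memH hP c⟩).mp
        (hdH3 ⟨_, memH hP c⟩ ((subDvdR_iff PH _ _).mpr hc1.2)
          ((subDvdR_iff PH _ _).mpr hc2.2))

lemma twistedDvdDelta (hact : ∀ x : G, ρ.act x '' (PH : Set H) = (PH : Set H))
    {ΔH : H} (hfix : ∀ x : G, ρ.act x ΔH = ΔH) (x : G) (b : H) :
    gdvdL PH (ρ.act x b) ΔH ↔ gdvdL PH b ΔH := by
  have e : (ρ.act x b)⁻¹ * ΔH = ρ.act x (b⁻¹ * ΔH) := by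
    rw [ρ.act_mul, act_inv, hfix]
  show (ρ.act x b)⁻¹ * ΔH ∈ PH ↔ b⁻¹ * ΔH ∈ PH
  rw [e, act_mem_iff PH hact]

lemma LR_transfer {K : Type*} [Group K] (Q : Submonoid K) {Δ : K} (hΔ : Δ ∈ Q)
    (hLR : Lset (⟨Δ, hΔ⟩ : Q) = Rset (⟨Δ, hΔ⟩ : Q)) {x : K} (hx : x ∈ Q) :
    gdvdL Q x Δ ↔ gdvdR Q x Δ := by
  rw [← subDvdL_iff Q ⟨x, hx⟩ ⟨Δ, hΔ⟩, ← subDvdR_iff Q ⟨x, hx⟩ ⟨Δ, hΔ⟩]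
  constructor
  · intro h
    have h' : (⟨x, hx⟩ : Q) ∈ Lset (⟨Δ, hΔ⟩ : Q) := h
    rw [hLR] at h'
    exact h'
  · intro h
    have h' : (⟨x, hx⟩ : Q) ∈ Rset (⟨Δ, hΔ⟩ : Q) := h
    rw [← hLR] at h'
    exact h'

end SdpLattice
/-- **Theorem 4.1.** If `Δ_H` is fixed under the action of `G`, then
`P = G⁺ ⋉ H⁺` is a Garside monoid with Garside element `(Δ_G, Δ_H)`, the set of
simple elements being `{(a,b) : a ≤_L Δ_G, b ≤_L Δ_H}`, and `G ⋉ H` is its group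
of fractions, i.e. a Garside group with positive monoid `P`. -/
theorem sdp_isGarsideMonoid {G H : Type*} [Group G] [Group H] (ρ : RightAction G H)
    (PG : Submonoid G) (PH : Submonoid H) (ΔG : G) (ΔH : H)
    (hG : IsGarsideGroup PG ΔG) (hH : IsGarsideGroup PH ΔH)
    (hact : ∀ x : G, ρ.act x '' (PH : Set H) = (PH : Set H))
    (hfix : ∀ x : G, ρ.act x ΔH = ΔH)
    (hΔG : ΔG ∈ PG) (hΔH : ΔH ∈ PH)
    (P : Submonoid (SDP ρ))
    (hP : ∀ p : SDP ρ, p ∈ P ↔ p.g ∈ PG ∧ p.h ∈ PH) :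
    IsGarsideMonoid P ∧
    IsGarsideElt (⟨SDP.mk ΔG ΔH, (hP (SDP.mk ΔG ΔH)).mpr ⟨hΔG, hΔH⟩⟩ : P) ∧
    Lset (⟨SDP.mk ΔG ΔH, (hP (SDP.mk ΔG ΔH)).mpr ⟨hΔG, hΔH⟩⟩ : P) =
      {p : P | gdvdL PG ((p : SDP ρ)).g ΔG ∧ gdvdL PH ((p : SDP ρ)).h ΔH} ∧
    IsGarsideGroup P (SDP.mk ΔG ΔH) := by
  obtain ⟨hGmon, hGfrac, hΔG', hGΔ⟩ := hG
  obtain ⟨hHmon, hHfrac, hΔH', hHΔ⟩ := hH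
  obtain ⟨hGfg, hGlc, hGrc, hGat, hGglbL, hGlubL, hGglbR, hGlubR, -⟩ := hGmon
  obtain ⟨hHfg, hHlc, hHrc, hHat, hHglbL, hHlubL, hHglbR, hHlubR, -⟩ := hHmon
  set Δ : P := ⟨SDP.mk ΔG ΔH, (hP (SDP.mk ΔG ΔH)).mpr ⟨hΔG, hΔH⟩⟩ with hΔdef
  have hlset : Lset Δ =
      {p : P | gdvdL PG ((p : SDP ρ)).g ΔG ∧ gdvdL PH ((p : SDP ρ)).h ΔH} := by
    ext p
    show dvdL p Δ ↔ _
    rw [dvdL_char hact hP]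
    show (gdvdL PG ((p : SDP ρ)).g ΔG ∧
      gdvdL PH (ρ.act ((p : SDP ρ)).g⁻¹ ((p : SDP ρ)).h) (ρ.act ΔG⁻¹ ΔH)) ↔ _
    rw [hfix ΔG⁻¹]
    exact and_congr Iff.rfl (twistedDvdDelta hact hfix _ _)
  have hrset : Rset Δ =
      {p : P | gdvdL PG ((p : SDP ρ)).g ΔG ∧ gdvdL PH ((p : SDP ρ)).h ΔH} := by
    ext p
    show dvdR p Δ ↔ _
    rw [dvdR_char hact hP]
    show (gdvdR PG ((p : SDP ρ)).g ΔG ∧ gdvdR PH ((p : SDP ρ)).h ΔH) ↔ _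
    exact and_congr (LR_transfer PG hΔG' hGΔ.1 (memG hP p)).symm
      (LR_transfer PH hΔH' hHΔ.1 (memH hP p)).symm
  have hgen : Submonoid.closure (Lset Δ) = ⊤ := by
    apply genP hP hGΔ.2 hHΔ.2
    intro y hy
    rw [hlset]
    rcases hy with ⟨a, ha, rfl⟩ | ⟨b, hb, rfl⟩
    · refine ⟨(subDvdL_iff PG a ⟨ΔG, hΔG'⟩).mp ha, ?_⟩
      show (1 : H)⁻¹ * ΔH ∈ PH
      rw [inv_one, one_mul]
      exact hΔH
    · refine ⟨?_, (subDvdL_iff PH b ⟨ΔH, hΔH'⟩).mp hb⟩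
      show (1 : G)⁻¹ * ΔG ∈ PG
      rw [inv_one, one_mul]
      exact hΔG
  have hge : IsGarsideElt Δ := ⟨hlset.trans hrset.symm, hgen⟩
  have hmon : IsGarsideMonoid P := by
    refine ⟨?_, ?_, ?_, atomicP hact hP hGat hHat, glbLP hact hP hGglbL hHglbL,
      lubLP hact hP hGlubL hHlubL, glbRP hact hP hGglbR hHglbR,
      lubRP hact hP hGlubR hHlubR, ⟨Δ, hge⟩⟩
    · obtain ⟨SG, hSGfin, hSGcl⟩ := hGfg
      obtain ⟨SH, hSHfin, hSHcl⟩ := hHfg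
      exact ⟨iotaG hP '' SG ∪ iotaH hP '' SH,
        (hSGfin.image _).union (hSHfin.image _),
        genP hP hSGcl hSHcl (subset_refl _)⟩
    · intro a b c e
      apply Subtype.ext
      have e' := congrArg Subtype.val e
      simp only [Submonoid.coe_mul] at e'
      exact mul_left_cancel e'
    · intro a b c e
      apply Subtype.ext
      have e' := congrArg Subtype.val e
      simp only [Submonoid.coe_mul] at e'
      exact mul_right_cancel e'
  have hfrac : ∀ s : SDP ρ, ∃ a b : P, s = (a : SDP ρ) * ((b : SDP ρ))⁻¹ := by
    intro s
    obtain ⟨a1, a2, hx⟩ := hGfrac s.g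
    obtain ⟨b1, b2, hh⟩ := hHfrac (ρ.act (a2 : G) s.h)
    refine ⟨⟨SDP.mk (a1 : G) (b1 : H), (hP _).mpr ⟨a1.2, b1.2⟩⟩,
      ⟨SDP.mk (a2 : G) (b2 : H), (hP _).mpr ⟨a2.2, b2.2⟩⟩, ?_⟩
    show s = SDP.mk (a1 : G) (b1 : H) * (SDP.mk (a2 : G) (b2 : H))⁻¹
    apply eq_mul_inv_of_mul_eq
    rw [← SDP.eta s, SDP.mk_mul_mk, SDP.mk.injEq]
    exact ⟨by rw [hx, inv_mul_cancel_right], by rw [hh, inv_mul_cancel_right]⟩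
  exact ⟨hmon, hge, hlset, hmon, hfrac, (hP _).mpr ⟨hΔG, hΔH⟩, hge⟩
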